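/- Let d : ℕ → A be admissible and not eventually periodic, and let n ≥ 1. For a word v ∈ L_n(X_d), say v belongs to class S_k (0 ≤ k ≤ n) if k is the largest t ≤ n such that (d)_t is a suffix of v. For a word w of length n occurring in d, let η(w) be the number of k ∈ {0, 1, …, n} such that there exists v ∈ S_k with v ≠ w and P(v) = P(w). Then the number of distinct extender sets of words of length n satisfies |E(n)| = Φ_n(d) + ∑_w η(w), where the sum is over all words w of length n occurring in d. -/

import Mathlib

namespace BetaShift

variable {A : Type*}

/-- The shift map: `(shift x) n = x (n+1)`. -/
def shift (x : ℕ → A) : ℕ → A := fun n => x (n + 1)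

/-- Lexicographic order on one-sided sequences: `x = y`, or there is an index `i`
such that `x j = y j` for all `j < i` and `x i < y i`. -/
def SeqLe [LinearOrder A] (x y : ℕ → A) : Prop :=
  x = y ∨ ∃ i, (∀ j, j < i → x j = y j) ∧ x i < y i

/-- A word `w` occurs in the sequence `x`. -/
def Occurs (w : List A) (x : ℕ → A) : Prop :=
  ∃ i : ℕ, ∀ j : Fin w.length, x (i + j) = w.get j

/-- `Complexity x n` is the number `Φ_n(x)` of distinct words of length `n` occurring in `x`. -/
noncomputable def Complexity (x : ℕ → A) (n : ℕ) : ℕ :=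
  Set.ncard {w : List A | w.length = n ∧ Occurs w x}

/-- A sequence is eventually periodic if there are `p ≥ 1` and `N` with
`d (i + p) = d i` for all `i ≥ N`. -/
def EventuallyPeriodic (d : ℕ → A) : Prop :=
  ∃ p, 1 ≤ p ∧ ∃ N, ∀ i, N ≤ i → d (i + p) = d i

/-- `(d)_k`, the `k`-letter prefix of the sequence `d`, as a word. -/
def prefixWord (d : ℕ → A) (k : ℕ) : List A := List.ofFn (fun i : Fin k => d i)

variable {m : ℕ}

/-- `d` is admissible: every shift of `d` is lexicographically ≤ `d`,
and `d` is not eventually `0`. -/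
def Admissible (d : ℕ → Fin m) : Prop :=
  (∀ i, SeqLe (shift^[i] d) d) ∧ ∀ N, ∃ i, N ≤ i ∧ (d i).val ≠ 0

/-- The one-sided β-shift `X_d` determined by the admissible sequence `d`. -/
def XSet (d : ℕ → Fin m) : Set (ℕ → Fin m) :=
  {x | ∀ i, SeqLe (shift^[i] x) d}

/-- The language of `X_d`: all words occurring in some point of `X_d`. -/
def Lang (d : ℕ → Fin m) : Set (List (Fin m)) :=
  {w | ∃ x ∈ XSet d, Occurs w x}

/-- The follower set of the word `w` in `X_d`. -/
def Fol (d : ℕ → Fin m) (w : List (Fin m)) : Set (List (Fin m)) :=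
  {u | w ++ u ∈ Lang d}

/-- The predecessor set of the word `w` in `X_d`. -/
def Pred (d : ℕ → Fin m) (w : List (Fin m)) : Set (List (Fin m)) :=
  {s | s ++ w ∈ Lang d}

/-- The extender set of the word `w` in `X_d`. -/
def Ext (d : ℕ → Fin m) (w : List (Fin m)) : Set (List (Fin m) × List (Fin m)) :=
  {p | p.1 ++ w ++ p.2 ∈ Lang d}

/-- `|F(n)|`: the number of distinct follower sets of words of length `n` in `X_d`. -/
noncomputable def FolCount (d : ℕ → Fin m) (n : ℕ) : ℕ :=
  Set.ncard {S | ∃ w ∈ Lang d, w.length = n ∧ S = Fol d w}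

/-- `|P(n)|`: the number of distinct predecessor sets of words of length `n` in `X_d`. -/
noncomputable def PredCount (d : ℕ → Fin m) (n : ℕ) : ℕ :=
  Set.ncard {S | ∃ w ∈ Lang d, w.length = n ∧ S = Pred d w}

/-- `|E(n)|`: the number of distinct extender sets of words of length `n` in `X_d`. -/
noncomputable def ExtCount (d : ℕ → Fin m) (n : ℕ) : ℕ :=
  Set.ncard {S | ∃ w ∈ Lang d, w.length = n ∧ S = Ext d w}

/-- The largest `k ≤ n` such that the `k`-letter prefix of `d` is a suffix of `v`
(`k = 0`, the empty prefix, always works). -/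
def classIndex (d : ℕ → Fin m) (n : ℕ) (v : List (Fin m)) : ℕ :=
  Nat.findGreatest (fun k => prefixWord d k <:+ v) n

/-- Lexicographic comparison of (equal-length) words: `u = v`, or at the first
index where they differ, `u` takes the smaller value. -/
def WordLe [LinearOrder A] (u v : List A) : Prop :=
  u = v ∨ ∃ i, ∃ (hu : i < u.length) (hv : i < v.length),
    (∀ j (hju : j < u.length) (hjv : j < v.length), j < i → u.get ⟨j, hju⟩ = v.get ⟨j, hjv⟩) ∧
    u.get ⟨i, hu⟩ < v.get ⟨i, hv⟩

end BetaShift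

open BetaShift

namespace BS16
open BetaShift

variable {m : ℕ} [NeZero m]

set_option linter.unusedSectionVars false

/-- zero-extension of a word to a one-sided sequence. -/
def e (w : List (Fin m)) : ℕ → Fin m := fun i => w.getD i 0

/-- the shifted sequence `σ^t d`. -/
def Dd (d : ℕ → Fin m) (t : ℕ) : ℕ → Fin m := fun i => d (t + i)

theorem Dd_zero (d : ℕ → Fin m) : Dd d 0 = d := funext fun i => by simp [Dd]

theorem seqLt_iff {x y : ℕ → Fin m} :
    toLex x < toLex y ↔ ∃ i, (∀ j, j < i → x j = y j) ∧ x i < y i := Iff.rfl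

theorem seqLe_iff {x y : ℕ → Fin m} : SeqLe x y ↔ toLex x ≤ toLex y := by
  constructor
  · rintro (rfl | ⟨i, h, hlt⟩)
    · exact le_rfl
    · exact le_of_lt (seqLt_iff.2 ⟨i, h, hlt⟩)
  · intro h
    rcases eq_or_lt_of_le h with h | h
    · exact Or.inl (congrArg ofLex h)
    · obtain ⟨i, h1, h2⟩ := seqLt_iff.1 h
      exact Or.inr ⟨i, h1, h2⟩

theorem seqle_refl (x : ℕ → Fin m) : SeqLe x x := Or.inl rfl

theorem seqle_trans {x y z : ℕ → Fin m} (h1 : SeqLe x y) (h2 : SeqLe y z) : SeqLe x z := by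
  rw [seqLe_iff] at *; exact le_trans h1 h2

theorem seqle_antisymm {x y : ℕ → Fin m} (h1 : SeqLe x y) (h2 : SeqLe y x) : x = y := by
  rw [seqLe_iff] at *
  exact congrArg ofLex (le_antisymm h1 h2)

theorem seqle_of_not {x y : ℕ → Fin m} (h : ¬ SeqLe x y) : SeqLe y x := by
  rw [seqLe_iff] at *; exact le_of_not_ge h

theorem e_eq_get {w : List (Fin m)} {i : ℕ} (h : i < w.length) : e w i = w[i] := by
  simp [e, List.getD_eq_getElem?_getD, List.getElem?_eq_getElem h]

theorem e_ge {w : List (Fin m)} {i : ℕ} (h : w.length ≤ i) : e w i = 0 := by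
  simp [e, List.getD_eq_getElem?_getD, List.getElem?_eq_none h]

theorem e_nil (i : ℕ) : e ([] : List (Fin m)) i = 0 := rfl

theorem e_append (a b : List (Fin m)) (i : ℕ) :
    e (a ++ b) i = if i < a.length then e a i else e b (i - a.length) := by
  unfold e
  rw [List.getD_eq_getElem?_getD, List.getElem?_append]
  split <;> rw [List.getD_eq_getElem?_getD]

theorem e_drop (w : List (Fin m)) (j i : ℕ) : e (w.drop j) i = e w (j + i) := by
  simp [e, List.getD_eq_getElem?_getD, List.getElem?_drop]

theorem e_ofFn {k : ℕ} (f : Fin k → Fin m) (i : ℕ) :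
    e (List.ofFn f) i = if h : i < k then f ⟨i, h⟩ else 0 := by
  simp [e, List.getD_eq_getElem?_getD, List.getElem?_ofFn, List.ofFnNthVal]
  split <;> simp

theorem list_eq_of_e {a b : List (Fin m)} (h : a.length = b.length)
    (he : ∀ i, e a i = e b i) : a = b := by
  refine List.ext_getElem h (fun i h1 h2 => ?_)
  have := he i
  rwa [e_eq_get h1, e_eq_get h2] at this

theorem shift_iter (x : ℕ → Fin m) (t : ℕ) : shift^[t] x = fun i => x (t + i) := by
  induction t with
  | zero => simp
  | succ t ih =>
    rw [Function.iterate_succ_apply', ih]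
    funext i
    show x (t + i + 1) = x (t + 1 + i)
    congr 1
    omega

theorem mem_XSet_iff {d x : ℕ → Fin m} :
    x ∈ XSet d ↔ ∀ t, SeqLe (fun i => x (t + i)) d := by
  unfold XSet
  simp only [Set.mem_setOf_eq, shift_iter]

theorem seqle_of_forall {x y : ℕ → Fin m}
    (h : ∀ i, (∀ j, j < i → x j = y j) → x i ≤ y i) : SeqLe x y := by
  by_cases hxy : x = y
  · exact Or.inl hxy
  · have hex : ∃ i, x i ≠ y i := by
      by_contra hc; push_neg at hc; exact hxy (funext hc)
    classical
    have hagree : ∀ j, j < Nat.find hex → x j = y j := fun j hj => by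
      have := Nat.find_min hex hj
      push_neg at this
      exact this
    exact Or.inr ⟨Nat.find hex, hagree,
      lt_of_le_of_ne (h _ hagree) (Nat.find_spec hex)⟩

theorem zero_seqle (y : ℕ → Fin m) : SeqLe (fun _ => (0 : Fin m)) y :=
  seqle_of_forall fun _ _ => Fin.zero_le _

theorem cut_le {d : ℕ → Fin m} (hd : Admissible d) {x y : ℕ → Fin m} (k : ℕ)
    (hle : SeqLe x d) (h1 : ∀ i, i < k → y i = x i) (h2 : ∀ i, k ≤ i → y i = 0) :
    SeqLe y d := by
  have key : (∀ i, i < k → x i = d i) ∨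
      (∃ i, i < k ∧ (∀ j, j < i → x j = d j) ∧ x i < d i) := by
    rcases hle with rfl | ⟨i, ha, hlt⟩
    · exact Or.inl fun i _ => rfl
    · by_cases hik : i < k
      · exact Or.inr ⟨i, hik, ha, hlt⟩
      · exact Or.inl fun j hj => ha j (lt_of_lt_of_le hj (not_lt.1 hik))
  rcases key with hk | ⟨i, hik, ha, hlt⟩
  · classical
    have hex' : ∃ i, k ≤ i ∧ d i ≠ 0 := by
      obtain ⟨i, hki, hne⟩ := hd.2 k
      refine ⟨i, hki, fun hc => hne ?_⟩
      rw [hc]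
      simp
    refine Or.inr ⟨Nat.find hex', ?_, ?_⟩
    · intro j hj
      by_cases hjk : j < k
      · rw [h1 j hjk, hk j hjk]
      · have hdj : d j = 0 := by
          have := Nat.find_min hex' hj
          push_neg at this
          exact this (not_lt.1 hjk)
        rw [h2 j (not_lt.1 hjk), hdj]
    · have hspec := Nat.find_spec hex'
      rw [h2 _ hspec.1]
      exact lt_of_le_of_ne (Fin.zero_le _) (Ne.symm hspec.2)
  · exact Or.inr ⟨i, fun j hj => by rw [h1 j (hj.trans hik), ha j hj],
      by rw [h1 i hik]; exact hlt⟩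

theorem occurs_iff {w : List (Fin m)} {x : ℕ → Fin m} :
    Occurs w x ↔ ∃ t, ∀ i, i < w.length → e w i = x (t + i) := by
  unfold Occurs
  constructor
  · rintro ⟨t, h⟩
    refine ⟨t, fun i hi => ?_⟩
    rw [e_eq_get hi]
    have := h ⟨i, hi⟩
    simp only [List.get_eq_getElem] at this
    exact this.symm
  · rintro ⟨t, h⟩
    refine ⟨t, fun j => ?_⟩
    have := h j.1 j.2
    rw [e_eq_get j.2] at this
    simp only [List.get_eq_getElem]
    exact this.symm

theorem lang_iff {d : ℕ → Fin m} (hd : Admissible d) {w : List (Fin m)} :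
    w ∈ Lang d ↔ e w ∈ XSet d := by
  constructor
  · rintro ⟨x, hx, hocc⟩
    rw [occurs_iff] at hocc
    obtain ⟨t0, hocc⟩ := hocc
    rw [mem_XSet_iff]
    intro t
    refine cut_le hd (w.length - t) ((mem_XSet_iff.1 hx) (t0 + t)) ?_ ?_
    · intro i hi
      have hti : t + i < w.length := by omega
      show e w (t + i) = x (t0 + t + i)
      rw [hocc (t + i) hti]
      congr 1
      omega
    · intro i hi
      exact e_ge (by omega)
  · intro h
    exact ⟨e w, h, occurs_iff.2 ⟨0, fun i hi => by rw [zero_add]⟩⟩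

theorem lang_iff' {d : ℕ → Fin m} (hd : Admissible d) {w : List (Fin m)} :
    w ∈ Lang d ↔ ∀ j, SeqLe (e (w.drop j)) d := by
  rw [lang_iff hd, mem_XSet_iff]
  constructor <;> intro h j
  · have := h j
    have hfe : e (w.drop j) = fun i => e w (j + i) := funext fun i => e_drop w j i
    rwa [hfe]
  · have := h j
    have hfe : e (w.drop j) = fun i => e w (j + i) := funext fun i => e_drop w j i
    rwa [hfe] at this

/-! ### word-vs-shifted-prefix comparisons -/

def IsAt (d : ℕ → Fin m) (t : ℕ) (a : List (Fin m)) : Prop :=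
  ∀ i, i < a.length → e a i = d (t + i)

def StrictAt (d : ℕ → Fin m) (t : ℕ) (a : List (Fin m)) : Prop :=
  ∃ i, i < a.length ∧ (∀ j, j < i → e a j = d (t + j)) ∧ e a i < d (t + i)

theorem strictAt_not_isAt {d : ℕ → Fin m} {t : ℕ} {a : List (Fin m)}
    (h : StrictAt d t a) : ¬ IsAt d t a := by
  obtain ⟨i, hi, _, hlt⟩ := h
  intro hIs
  rw [hIs i hi] at hlt
  exact lt_irrefl _ hlt

theorem isAt_seqle {d : ℕ → Fin m} {t : ℕ} {a : List (Fin m)} (h : IsAt d t a) :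
    SeqLe (e a) (Dd d t) :=
  seqle_of_forall fun i _ => by
    by_cases hi : i < a.length
    · exact le_of_eq (h i hi)
    · rw [e_ge (not_lt.1 hi)]; exact Fin.zero_le _

theorem strictAt_seqle {d : ℕ → Fin m} {t : ℕ} {a : List (Fin m)} (h : StrictAt d t a) :
    SeqLe (e a) (Dd d t) := by
  obtain ⟨i, _, ha, hlt⟩ := h
  exact Or.inr ⟨i, fun j hj => ha j hj, hlt⟩

theorem seqle_isAt_or_strictAt {d : ℕ → Fin m} {t : ℕ} {a : List (Fin m)}
    (h : SeqLe (e a) (Dd d t)) : StrictAt d t a ∨ IsAt d t a := by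
  rcases h with heq | ⟨i, ha, hlt⟩
  · right; intro i _; exact congrFun heq i
  · by_cases hi : i < a.length
    · left; exact ⟨i, hi, ha, hlt⟩
    · right; intro l hl; exact ha l (by omega)

theorem strictAt_iff {d : ℕ → Fin m} {t : ℕ} {a : List (Fin m)} :
    StrictAt d t a ↔ SeqLe (e a) (Dd d t) ∧ ¬ IsAt d t a := by
  constructor
  · intro h; exact ⟨strictAt_seqle h, strictAt_not_isAt h⟩
  · rintro ⟨h1, h2⟩
    rcases seqle_isAt_or_strictAt h1 with h | h
    · exact h
    · exact absurd h h2

/-! ### the splitting lemma for concatenations -/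

theorem split {d : ℕ → Fin m} (t : ℕ) (a b : List (Fin m)) :
    SeqLe (e (a ++ b)) (Dd d t) ↔
      StrictAt d t a ∨ (IsAt d t a ∧ SeqLe (e b) (Dd d (t + a.length))) := by
  constructor
  · intro h
    rcases h with heq | ⟨i, ha, hlt⟩
    · right
      have hIs : IsAt d t a := fun i hi => by
        have h0 := congrFun heq i
        rwa [e_append, if_pos hi] at h0
      refine ⟨hIs, Or.inl (funext fun i => ?_)⟩
      have h0 := congrFun heq (a.length + i)
      rw [e_append, if_neg (by omega)] at h0
      show e b i = d (t + a.length + i)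
      calc e b i = e b (a.length + i - a.length) := by congr 1; omega
      _ = d (t + (a.length + i)) := h0
      _ = d (t + a.length + i) := by congr 1; omega
    · by_cases hia : i < a.length
      · left
        refine ⟨i, hia, fun j hj => ?_, ?_⟩
        · have h0 := ha j hj; rwa [e_append, if_pos (by omega)] at h0
        · have h0 := hlt; rwa [e_append, if_pos hia] at h0
      · right
        have hIs : IsAt d t a := fun l hl => by
          have h0 := ha l (by omega); rwa [e_append, if_pos hl] at h0
        refine ⟨hIs, Or.inr ⟨i - a.length, fun j hj => ?_, ?_⟩⟩
        · have h0 := ha (a.length + j) (by omega)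
          rw [e_append, if_neg (by omega)] at h0
          show e b j = d (t + a.length + j)
          calc e b j = e b (a.length + j - a.length) := by congr 1; omega
          _ = d (t + (a.length + j)) := h0
          _ = d (t + a.length + j) := by congr 1; omega
        · have h0 := hlt
          rw [e_append, if_neg hia] at h0
          show e b (i - a.length) < d (t + a.length + (i - a.length))
          have h1 : d (t + a.length + (i - a.length)) = d (t + i) := by congr 1; omega
          rw [h1]
          exact h0
  · rintro (⟨i, hi, ha, hlt⟩ | ⟨hIs, hb⟩)
    · refine Or.inr ⟨i, fun j hj => ?_, ?_⟩
      · rw [e_append, if_pos (by omega)]; exact ha j hj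
      · rw [e_append, if_pos hi]; exact hlt
    · rcases hb with heq | ⟨i, hb1, hb2⟩
      · left
        funext i
        rw [e_append]
        split
        · exact hIs i ‹_›
        · show e b (i - a.length) = d (t + i)
          calc e b (i - a.length) = d (t + a.length + (i - a.length)) := congrFun heq _
          _ = d (t + i) := by congr 1; omega
      · refine Or.inr ⟨a.length + i, fun j hj => ?_, ?_⟩
        · rw [e_append]
          split
          · exact hIs j ‹_›
          · show e b (j - a.length) = d (t + j)
            calc e b (j - a.length) = d (t + a.length + (j - a.length)) :=
              hb1 (j - a.length) (by omega)
            _ = d (t + j) := by congr 1; omega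
        · rw [e_append, if_neg (by omega)]
          show e b (a.length + i - a.length) < d (t + (a.length + i))
          calc e b (a.length + i - a.length) = e b i := by congr 1; omega
          _ < d (t + a.length + i) := hb2
          _ = d (t + (a.length + i)) := by congr 1; omega

/-! ### admissibility consequences -/

theorem adm_shift {d : ℕ → Fin m} (hd : Admissible d) (t : ℕ) : SeqLe (Dd d t) d := by
  have h := hd.1 t
  rwa [shift_iter] at h

theorem suffix_shift {d : ℕ → Fin m} (hd : Admissible d) {a b : ℕ} (hab : a ≤ b)
    (h : ∀ i, i < a → d (b - a + i) = d i) : SeqLe (Dd d b) (Dd d a) := by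
  rcases adm_shift hd (b - a) with heq | ⟨i, ha, hlt⟩
  · left
    funext i
    show d (b + i) = d (a + i)
    calc d (b + i) = d (b - a + (a + i)) := by congr 1; omega
    _ = d (a + i) := congrFun heq (a + i)
  · by_cases hia : i < a
    · exfalso
      have h0 : Dd d (b - a) i = d i := h i hia
      rw [h0] at hlt
      exact lt_irrefl _ hlt
    · refine Or.inr ⟨i - a, fun j hj => ?_, ?_⟩
      · show d (b + j) = d (a + j)
        calc d (b + j) = d (b - a + (a + j)) := by congr 1; omega
        _ = d (a + j) := ha (a + j) (by omega)
      · show d (b + (i - a)) < d (a + (i - a))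
        have h1 : d (b + (i - a)) = d (b - a + i) := by congr 1; omega
        have h2 : d (a + (i - a)) = d i := by congr 1; omega
        rw [h1, h2]
        exact hlt

/-! ### segments of `d` -/

def seg (d : ℕ → Fin m) (t l : ℕ) : List (Fin m) := List.ofFn fun i : Fin l => d (t + i)

theorem seg_length (d : ℕ → Fin m) (t l : ℕ) : (seg d t l).length = l :=
  List.length_ofFn

theorem e_seg (d : ℕ → Fin m) (t l i : ℕ) :
    e (seg d t l) i = if i < l then d (t + i) else 0 := by
  rw [seg, e_ofFn]
  split <;> simp_all

theorem isAt_seg (d : ℕ → Fin m) (t l : ℕ) : IsAt d t (seg d t l) := by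
  intro i hi
  rw [seg_length] at hi
  rw [e_seg, if_pos hi]

theorem eq_seg_of_isAt {d : ℕ → Fin m} {t : ℕ} {w : List (Fin m)} (h : IsAt d t w) :
    w = seg d t w.length := by
  refine list_eq_of_e (by rw [seg_length]) (fun i => ?_)
  by_cases hi : i < w.length
  · rw [h i hi, e_seg, if_pos hi]
  · rw [e_ge (by omega), e_seg, if_neg (by omega)]

theorem seg_mem_lang {d : ℕ → Fin m} (hd : Admissible d) (t l : ℕ) : seg d t l ∈ Lang d := by
  rw [lang_iff' hd]
  intro j
  refine cut_le hd (l - j) (adm_shift hd (t + j)) ?_ ?_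
  · intro i hi
    rw [e_drop, e_seg, if_pos (by omega)]
    show d (t + (j + i)) = d (t + j + i)
    congr 1; omega
  · intro i hi
    rw [e_drop, e_seg, if_neg (by omega)]

/-! ### prefix words -/

theorem prefixWord_length (d : ℕ → Fin m) (k : ℕ) : (prefixWord d k).length = k :=
  List.length_ofFn

theorem prefixWord_zero (d : ℕ → Fin m) : prefixWord d 0 = [] :=
  List.ofFn_zero

theorem e_prefixWord (d : ℕ → Fin m) (k i : ℕ) :
    e (prefixWord d k) i = if i < k then d i else 0 := by
  rw [prefixWord, e_ofFn]
  split <;> simp_all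

theorem prefixWord_eq_seg (d : ℕ → Fin m) (k : ℕ) : prefixWord d k = seg d 0 k := by
  refine list_eq_of_e (by rw [prefixWord_length, seg_length]) (fun i => ?_)
  rw [e_prefixWord, e_seg]
  split <;> [skip; rfl]
  show d i = d (0 + i)
  congr 1; omega

theorem suffix_e {a w : List (Fin m)} (h : a <:+ w) {i : ℕ} (hi : i < a.length) :
    e w (w.length - a.length + i) = e a i := by
  obtain ⟨p, hp⟩ := h
  subst hp
  have hl : (p ++ a).length = p.length + a.length := by simp
  rw [e_append, hl, if_neg (by omega)]
  congr 1
  omega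

theorem suffix_shift' {d : ℕ → Fin m} (hd : Admissible d) {w : List (Fin m)} {a b : ℕ}
    (hsa : prefixWord d a <:+ w) (hsb : prefixWord d b <:+ w) (hab : a ≤ b) :
    SeqLe (Dd d b) (Dd d a) := by
  have hbw : b ≤ w.length := by
    have h0 := hsb.length_le
    rwa [prefixWord_length] at h0
  refine suffix_shift hd hab (fun i hi => ?_)
  have h1 := suffix_e hsa (show i < (prefixWord d a).length by rw [prefixWord_length]; omega)
  have h2 := suffix_e hsb
    (show b - a + i < (prefixWord d b).length by rw [prefixWord_length]; omega)
  rw [prefixWord_length] at h1 h2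
  rw [e_prefixWord, if_pos (by omega)] at h1 h2
  have h3 : w.length - b + (b - a + i) = w.length - a + i := by omega
  rw [h3] at h2
  rw [← h1, ← h2]

/-! ### classIndex basics -/

theorem classIndex_le (d : ℕ → Fin m) (n : ℕ) (v : List (Fin m)) :
    classIndex d n v ≤ n := Nat.findGreatest_le n

theorem classIndex_suffix (d : ℕ → Fin m) (n : ℕ) (v : List (Fin m)) :
    prefixWord d (classIndex d n v) <:+ v := by
  exact Nat.findGreatest_spec (P := fun k => prefixWord d k <:+ v) (Nat.zero_le n)
    (by show prefixWord d 0 <:+ v; rw [prefixWord_zero]; exact List.nil_suffix)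

theorem le_classIndex {d : ℕ → Fin m} {n : ℕ} {v : List (Fin m)} {t : ℕ}
    (h : t ≤ n) (hs : prefixWord d t <:+ v) : t ≤ classIndex d n v :=
  Nat.le_findGreatest h hs

/-! ### the set `T(w)` -/

def Tset (d : ℕ → Fin m) (w : List (Fin m)) : Set ℕ := {t | SeqLe (e w) (Dd d t)}

theorem mem_Tset {d : ℕ → Fin m} {w : List (Fin m)} {t : ℕ} :
    t ∈ Tset d w ↔ SeqLe (e w) (Dd d t) := Iff.rfl

theorem e_nil_seqle (y : ℕ → Fin m) : SeqLe (e ([] : List (Fin m))) y := by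
  have h : e ([] : List (Fin m)) = fun _ => 0 := funext e_nil
  rw [h]
  exact zero_seqle y

theorem nil_mem_lang {d : ℕ → Fin m} (hd : Admissible d) : ([] : List (Fin m)) ∈ Lang d := by
  rw [lang_iff' hd]
  intro j
  rw [List.drop_nil]
  exact seqle_trans (e_nil_seqle d) (seqle_refl d)

theorem split0 {d : ℕ → Fin m} (a b : List (Fin m)) :
    SeqLe (e (a ++ b)) d ↔ StrictAt d 0 a ∨ (IsAt d 0 a ∧ SeqLe (e b) (Dd d a.length)) := by
  have h := split (d := d) 0 a b
  rw [Dd_zero, show (0 + a.length) = a.length from by omega] at h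
  exact h

theorem tset_iff_seg {d : ℕ → Fin m} (hd : Admissible d) {v : List (Fin m)} {n t : ℕ}
    (hvn : v.length = n) : SeqLe (e v) (Dd d t) ↔ SeqLe (e v) (e (seg d t n)) := by
  constructor
  · intro h
    rcases h with heq | ⟨i, ha, hlt⟩
    · exfalso
      obtain ⟨i0, hi0, hne⟩ := hd.2 (t + n)
      have h1 := congrFun heq (i0 - t)
      rw [e_ge (by omega)] at h1
      apply hne
      have h2 : d i0 = 0 := by
        rw [show d i0 = d (t + (i0 - t)) from by congr 1; omega]
        exact h1.symm
      rw [h2]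
      simp
    · by_cases hin : i < n
      · refine Or.inr ⟨i, fun j hj => ?_, ?_⟩
        · rw [e_seg, if_pos (by omega)]; exact ha j hj
        · rw [e_seg, if_pos hin]; exact hlt
      · left
        funext j
        rw [e_seg]
        split
        · exact ha j (by omega)
        · exact e_ge (by omega)
  · intro h
    refine seqle_trans h (seqle_of_forall fun i _ => ?_)
    rw [e_seg]
    split
    · exact le_refl _
    · exact Fin.zero_le _

/-! ### testing membership in a closed set via prefix words -/

theorem pred_test_mp {d : ℕ → Fin m} {X : Set ℕ} {t : ℕ} (ht : 0 < t)
    (h : ∀ j, j < t → StrictAt d 0 ((prefixWord d t).drop j) ∨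
        (IsAt d 0 ((prefixWord d t).drop j) ∧ (t - j) ∈ X)) : t ∈ X := by
  have h0 := h 0 ht
  rw [List.drop_zero] at h0
  rcases h0 with hS | ⟨_, hmem⟩
  · exfalso
    obtain ⟨i, hi, _, hlt⟩ := hS
    rw [prefixWord_length] at hi
    rw [e_prefixWord, if_pos hi, show (0 + i) = i from by omega] at hlt
    exact lt_irrefl _ hlt
  · simpa using hmem

theorem pred_test_mpr {d : ℕ → Fin m} (hd : Admissible d) {X : Set ℕ}
    (hX : ∀ a b : ℕ, a ≤ b → (∀ i, i < a → d (b - a + i) = d i) → b ∈ X → a ∈ X)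
    {t : ℕ} (htX : t ∈ X) :
    ∀ j, j < t → StrictAt d 0 ((prefixWord d t).drop j) ∨
      (IsAt d 0 ((prefixWord d t).drop j) ∧ (t - j) ∈ X) := by
  intro j hj
  have key : (∀ i, i < t - j → d (j + i) = d i) ∨
      (∃ i, i < t - j ∧ (∀ l, l < i → d (j + l) = d l) ∧ d (j + i) < d i) := by
    rcases adm_shift hd j with heq | ⟨i, ha, hlt⟩
    · exact Or.inl fun i _ => congrFun heq i
    · by_cases hit : i < t - j
      · exact Or.inr ⟨i, hit, fun l hl => ha l hl, hlt⟩
      · exact Or.inl fun l hl => ha l (by omega)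
  have hdroplen : ((prefixWord d t).drop j).length = t - j := by
    rw [List.length_drop, prefixWord_length]
  have hdropval : ∀ i, i < t - j → e ((prefixWord d t).drop j) i = d (j + i) := by
    intro i hi
    rw [e_drop, e_prefixWord, if_pos (by omega)]
  rcases key with hAg | ⟨i, hit, hlo, hlt⟩
  · right
    constructor
    · intro i hi
      rw [hdroplen] at hi
      rw [hdropval i hi, hAg i hi]
      congr 1; omega
    · refine hX (t - j) t (by omega) (fun i hi => ?_) htX
      calc d (t - (t - j) + i) = d (j + i) := by congr 1; omega
      _ = d i := hAg i hi
  · left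
    refine ⟨i, by omega, fun l hl => ?_, ?_⟩
    · rw [hdropval l (by omega), hlo l hl]
      congr 1; omega
    · rw [hdropval i hit]
      calc d (j + i) < d i := hlt
      _ = d (0 + i) := by congr 1; omega

/-! ### the follower reduction -/

theorem follower_red {d : ℕ → Fin m} (hd : Admissible d) {w u : List (Fin m)} {n : ℕ}
    (hw : w ∈ Lang d) (hwn : w.length = n) (hu : u ∈ Lang d) :
    (∀ j, j < n → SeqLe (e (w.drop j ++ u)) d) ↔ SeqLe (e u) (Dd d (classIndex d n w)) := by
  set k := classIndex d n w with hkdef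
  have hkn : k ≤ n := classIndex_le d n w
  have hks : prefixWord d k <:+ w := classIndex_suffix d n w
  constructor
  · intro h
    rcases Nat.eq_zero_or_pos k with hk0 | hkpos
    · rw [hk0, Dd_zero]
      have h0 := (lang_iff' hd).1 hu 0
      rwa [List.drop_zero] at h0
    · have hj : n - k < n := by omega
      have hdropeq : w.drop (n - k) = prefixWord d k := by
        obtain ⟨p, hp⟩ := hks
        have hpl : p.length = n - k := by
          have h1 := congrArg List.length hp
          rw [List.length_append, prefixWord_length, hwn] at h1
          omega
        rw [← hp, ← hpl, List.drop_left]
      have h0 := h (n - k) hj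
      rw [split0] at h0
      rcases h0 with hS | ⟨_, hle⟩
      · exfalso
        obtain ⟨i, hi, _, hlt⟩ := hS
        rw [hdropeq, prefixWord_length] at hi
        rw [hdropeq, e_prefixWord, if_pos hi, show (0 + i) = i from by omega] at hlt
        exact lt_irrefl _ hlt
      · rw [hdropeq, prefixWord_length] at hle
        exact hle
  · intro h j hj
    have hwj := (lang_iff' hd).1 hw j
    rw [split0]
    rcases seqle_isAt_or_strictAt (by rwa [← Dd_zero (d := d)] at hwj) with hS | hIs
    · exact Or.inl hS
    · right
      refine ⟨hIs, ?_⟩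
      have hlen : (w.drop j).length = n - j := by rw [List.length_drop, hwn]
      have hsufeq : w.drop j = prefixWord d (n - j) := by
        refine list_eq_of_e (by rw [hlen, prefixWord_length]) (fun i => ?_)
        by_cases hi : i < n - j
        · rw [e_prefixWord, if_pos hi, hIs i (by rw [hlen]; exact hi)]
          congr 1; omega
        · rw [e_prefixWord, if_neg hi, e_ge (by rw [hlen]; omega)]
      have hsuf : prefixWord d (n - j) <:+ w := by
        rw [← hsufeq]; exact List.drop_suffix _ _
      have hle2 : n - j ≤ k := le_classIndex (by omega) hsuf
      have hfin : SeqLe (e u) (Dd d (n - j)) :=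
        seqle_trans h (suffix_shift' hd hsuf hks hle2)
      rw [hlen]
      exact hfin

/-! ### the master formula for extender membership -/

theorem ext_mem {d : ℕ → Fin m} (hd : Admissible d) {w : List (Fin m)} {n : ℕ}
    (hw : w ∈ Lang d) (hwn : w.length = n) (s u : List (Fin m)) :
    s ++ w ++ u ∈ Lang d ↔
      u ∈ Lang d ∧ SeqLe (e u) (Dd d (classIndex d n w)) ∧
        ∀ j, j < s.length → StrictAt d 0 (s.drop j) ∨
          (IsAt d 0 (s.drop j) ∧
            (StrictAt d (s.length - j) w ∨
              (IsAt d (s.length - j) w ∧ SeqLe (e u) (Dd d (s.length - j + n))))) := by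
  have hlen1 : (s ++ w).length = s.length + n := by rw [List.length_append, hwn]
  have hdrop1 : ∀ j, j < s.length → (s ++ w ++ u).drop j = (s.drop j ++ w) ++ u := by
    intro j hj
    rw [List.drop_append_of_le_length (by rw [hlen1]; omega),
        List.drop_append_of_le_length (by omega)]
  have hdrop2 : ∀ j', j' ≤ n → (s ++ w ++ u).drop (s.length + j') = w.drop j' ++ u := by
    intro j' hj'
    rw [List.drop_append_of_le_length (by rw [hlen1]; omega)]
    congr 1
    exact List.drop_length_add_append j'
  have hdrop3 : ∀ j'', (s ++ w ++ u).drop (s.length + n + j'') = u.drop j'' := by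
    intro j''
    have h0 := List.drop_length_add_append (l₁ := s ++ w) (l₂ := u) j''
    rwa [hlen1] at h0
  rw [lang_iff' hd]
  constructor
  · intro h
    have hu : u ∈ Lang d := by
      rw [lang_iff' hd]
      intro j
      have h0 := h (s.length + n + j)
      rwa [hdrop3 j] at h0
    have hmid : ∀ j', j' < n → SeqLe (e (w.drop j' ++ u)) d := by
      intro j' hj'
      have h0 := h (s.length + j')
      rwa [hdrop2 j' (le_of_lt hj')] at h0
    refine ⟨hu, (follower_red hd hw hwn hu).1 hmid, ?_⟩
    intro j hj
    have h0 := h j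
    rw [hdrop1 j hj, List.append_assoc, split0] at h0
    rcases h0 with hS | ⟨hIs, hrest⟩
    · exact Or.inl hS
    · refine Or.inr ⟨hIs, ?_⟩
      rw [List.length_drop, split] at hrest
      rcases hrest with hS2 | ⟨hIs2, hle2⟩
      · exact Or.inl hS2
      · exact Or.inr ⟨hIs2, by rwa [hwn] at hle2⟩
  · rintro ⟨hu, hk, hcond⟩
    intro j
    rcases lt_or_ge j s.length with hj | hj
    · rw [hdrop1 j hj, List.append_assoc, split0]
      rcases hcond j hj with hS | ⟨hIs, hC⟩
      · exact Or.inl hS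
      · refine Or.inr ⟨hIs, ?_⟩
        rw [List.length_drop, split]
        rcases hC with hS2 | ⟨hIs2, hle2⟩
        · exact Or.inl hS2
        · exact Or.inr ⟨hIs2, by rwa [← hwn] at hle2⟩
    · rcases lt_or_ge j (s.length + n) with hj2 | hj2
      · rw [show j = s.length + (j - s.length) from by omega,
            hdrop2 (j - s.length) (by omega)]
        exact (follower_red hd hw hwn hu).2 hk (j - s.length) (by omega)
      · rw [show j = s.length + n + (j - s.length - n) from by omega, hdrop3]
        exact (lang_iff' hd).1 hu _

/-! ### predecessor sets -/

theorem pred_mem {d : ℕ → Fin m} (hd : Admissible d) {w : List (Fin m)} {n : ℕ}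
    (hw : w ∈ Lang d) (hwn : w.length = n) (s : List (Fin m)) :
    s ++ w ∈ Lang d ↔ ∀ j, j < s.length → StrictAt d 0 (s.drop j) ∨
      (IsAt d 0 (s.drop j) ∧ (s.length - j) ∈ Tset d w) := by
  have h := ext_mem hd hw hwn s []
  rw [List.append_nil] at h
  rw [h]
  have htriv1 : ([] : List (Fin m)) ∈ Lang d := nil_mem_lang hd
  have htriv2 : ∀ t, SeqLe (e ([] : List (Fin m))) (Dd d t) := fun t => e_nil_seqle _
  simp only [htriv1, htriv2, true_and, and_true]
  refine forall_congr' fun j => imp_congr_right fun hj =>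
    or_congr_right (and_congr_right fun _ => ?_)
  rw [mem_Tset]
  constructor
  · rintro (hS | hIs)
    · exact strictAt_seqle hS
    · exact isAt_seqle hIs
  · intro hle
    rcases seqle_isAt_or_strictAt hle with hS | hIs
    · exact Or.inl hS
    · exact Or.inr hIs

theorem prefix_mem_pred {d : ℕ → Fin m} (hd : Admissible d) {w : List (Fin m)} {n : ℕ}
    (hw : w ∈ Lang d) (hwn : w.length = n) (t : ℕ) :
    prefixWord d t ++ w ∈ Lang d ↔ t ∈ Tset d w := by
  rcases Nat.eq_zero_or_pos t with rfl | ht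
  · rw [prefixWord_zero, List.nil_append]
    refine iff_of_true hw ?_
    rw [mem_Tset, Dd_zero]
    have h0 := (lang_iff' hd).1 hw 0
    rwa [List.drop_zero] at h0
  · rw [pred_mem hd hw hwn, prefixWord_length]
    constructor
    · exact fun h => pred_test_mp ht h
    · exact fun h => pred_test_mpr hd
        (fun a b hab hagree hb => seqle_trans hb (suffix_shift hd hab hagree)) h

theorem pred_eq_iff {d : ℕ → Fin m} (hd : Admissible d) {w v : List (Fin m)} {n : ℕ}
    (hw : w ∈ Lang d) (hwn : w.length = n) (hv : v ∈ Lang d) (hvn : v.length = n) :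
    Pred d w = Pred d v ↔ Tset d w = Tset d v := by
  constructor
  · intro h
    ext t
    rw [← prefix_mem_pred hd hw hwn t, ← prefix_mem_pred hd hv hvn t]
    show prefixWord d t ∈ Pred d w ↔ prefixWord d t ∈ Pred d v
    rw [h]
  · intro h
    ext s
    show s ++ w ∈ Lang d ↔ s ++ v ∈ Lang d
    rw [pred_mem hd hw hwn, pred_mem hd hv hvn, h]

/-! ### consequences of non-periodicity -/

theorem shifts_ne {d : ℕ → Fin m} (hnp : ¬ EventuallyPeriodic d) {a b : ℕ} (hab : a ≠ b) :
    Dd d a ≠ Dd d b := by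
  wlog h : a < b generalizing a b
  · exact fun he => this hab.symm (by omega) he.symm
  intro he
  apply hnp
  refine ⟨b - a, by omega, a, fun i hi => ?_⟩
  calc d (i + (b - a)) = d (b + (i - a)) := by congr 1; omega
  _ = d (a + (i - a)) := (congrFun he (i - a)).symm
  _ = d i := by congr 1; omega

theorem seg_sep {d : ℕ → Fin m} (hd : Admissible d) {a b : ℕ}
    (h : toLex (Dd d b) < toLex (Dd d a)) :
    ∃ u : List (Fin m), u ∈ Lang d ∧ SeqLe (e u) (Dd d a) ∧ ¬ SeqLe (e u) (Dd d b) := by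
  obtain ⟨i, hagree, hlt⟩ := seqLt_iff.1 h
  refine ⟨seg d a (i + 1), seg_mem_lang hd a (i + 1), ?_, ?_⟩
  · refine seqle_of_forall fun l _ => ?_
    rw [e_seg]
    split
    · exact le_refl _
    · exact Fin.zero_le _
  · intro hle
    have hei : e (seg d a (i + 1)) i = d (a + i) := by rw [e_seg, if_pos (by omega)]
    rcases hle with heq | ⟨i', ha', hlt'⟩
    · have h0 := congrFun heq i
      rw [hei] at h0
      rw [← h0] at hlt
      exact lt_irrefl _ hlt
    · rcases lt_trichotomy i' i with hc | rfl | hc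
      · have h1 := hagree i' hc
        have h2 : e (seg d a (i + 1)) i' = d (a + i') := by rw [e_seg, if_pos (by omega)]
        rw [h2, h1] at hlt'
        exact lt_irrefl _ hlt'
      · rw [hei] at hlt'
        exact lt_irrefl _ (hlt'.trans hlt)
      · have h3 := ha' i hc
        rw [hei] at h3
        rw [← h3] at hlt
        exact lt_irrefl _ hlt

theorem fol_set_eq {d : ℕ → Fin m} (hd : Admissible d) (hnp : ¬ EventuallyPeriodic d)
    {a b : ℕ} (h : {u : List (Fin m) | u ∈ Lang d ∧ SeqLe (e u) (Dd d a)} =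
      {u : List (Fin m) | u ∈ Lang d ∧ SeqLe (e u) (Dd d b)}) : a = b := by
  by_contra hab
  have hne : toLex (Dd d a) ≠ toLex (Dd d b) :=
    fun hc => shifts_ne hnp hab (congrArg ofLex hc)
  rcases hne.lt_or_gt with hlt | hlt
  · obtain ⟨u, hu1, hu2, hu3⟩ := seg_sep hd hlt
    have hmem : u ∈ {u : List (Fin m) | u ∈ Lang d ∧ SeqLe (e u) (Dd d b)} := ⟨hu1, hu2⟩
    rw [← h] at hmem
    exact hu3 hmem.2
  · obtain ⟨u, hu1, hu2, hu3⟩ := seg_sep hd hlt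
    have hmem : u ∈ {u : List (Fin m) | u ∈ Lang d ∧ SeqLe (e u) (Dd d a)} := ⟨hu1, hu2⟩
    rw [h] at hmem
    exact hu3 hmem.2

theorem tset_closed {d : ℕ → Fin m} (hd : Admissible d) (w : List (Fin m)) :
    ∀ a b : ℕ, a ≤ b → (∀ i, i < a → d (b - a + i) = d i) → b ∈ Tset d w → a ∈ Tset d w :=
  fun _ _ hab hagree hb => seqle_trans hb (suffix_shift hd hab hagree)

/-! ### invariants determined by the extender set -/

theorem fol_iff {d : ℕ → Fin m} (hd : Admissible d) {w : List (Fin m)} {n : ℕ}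
    (hw : w ∈ Lang d) (hwn : w.length = n) (u : List (Fin m)) :
    w ++ u ∈ Lang d ↔ u ∈ Lang d ∧ SeqLe (e u) (Dd d (classIndex d n w)) := by
  have h := ext_mem hd hw hwn [] u
  rw [List.nil_append] at h
  rw [h]
  simp

theorem T_eq_of_ext {d : ℕ → Fin m} (hd : Admissible d) {w v : List (Fin m)} {n : ℕ}
    (hw : w ∈ Lang d) (hwn : w.length = n) (hv : v ∈ Lang d) (hvn : v.length = n)
    (h : Ext d w = Ext d v) : Tset d w = Tset d v := by
  ext t
  rw [← prefix_mem_pred hd hw hwn t, ← prefix_mem_pred hd hv hvn t]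
  have h0 : prefixWord d t ++ w ++ [] ∈ Lang d ↔ prefixWord d t ++ v ++ [] ∈ Lang d := by
    constructor
    · intro hx
      have hx' : (prefixWord d t, ([] : List (Fin m))) ∈ Ext d w := hx
      rw [h] at hx'
      exact hx'
    · intro hx
      have hx' : (prefixWord d t, ([] : List (Fin m))) ∈ Ext d v := hx
      rw [← h] at hx'
      exact hx'
  rwa [List.append_nil, List.append_nil] at h0

theorem cl_eq_of_ext {d : ℕ → Fin m} (hd : Admissible d) (hnp : ¬ EventuallyPeriodic d)
    {w v : List (Fin m)} {n : ℕ}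
    (hw : w ∈ Lang d) (hwn : w.length = n) (hv : v ∈ Lang d) (hvn : v.length = n)
    (h : Ext d w = Ext d v) : classIndex d n w = classIndex d n v := by
  apply fol_set_eq hd hnp
  ext u
  simp only [Set.mem_setOf_eq]
  rw [← fol_iff hd hw hwn u, ← fol_iff hd hv hvn u]
  show ([], u) ∈ Ext d w ↔ ([], u) ∈ Ext d v
  rw [h]

/-! ### the normal form of an extender set -/

def E0 (d : ℕ → Fin m) (X : Set ℕ) (k : ℕ) : Set (List (Fin m) × List (Fin m)) :=
  {p | p.2 ∈ Lang d ∧ SeqLe (e p.2) (Dd d k) ∧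
    ∀ j, j < p.1.length → StrictAt d 0 (p.1.drop j) ∨
      (IsAt d 0 (p.1.drop j) ∧ (p.1.length - j) ∈ X)}

theorem ext_eq_E0 {d : ℕ → Fin m} (hd : Admissible d) {w : List (Fin m)} {n : ℕ}
    (hw : w ∈ Lang d) (hwn : w.length = n)
    (hM : ∀ t, 1 ≤ t → ¬ IsAt d t w) :
    Ext d w = E0 d (Tset d w) (classIndex d n w) := by
  ext p
  show p.1 ++ w ++ p.2 ∈ Lang d ↔ _
  rw [ext_mem hd hw hwn p.1 p.2]
  simp only [E0, Set.mem_setOf_eq]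
  refine and_congr_right fun hu => and_congr_right fun hk => forall_congr' fun j =>
    imp_congr_right fun hj => or_congr_right (and_congr_right fun _ => ?_)
  have ht1 : 1 ≤ p.1.length - j := by omega
  rw [mem_Tset]
  constructor
  · rintro (hS | ⟨hIs, _⟩)
    · exact strictAt_seqle hS
    · exact absurd hIs (hM _ ht1)
  · intro hle
    rcases seqle_isAt_or_strictAt hle with hS | hIs
    · exact Or.inl hS
    · exact absurd hIs (hM _ ht1)

theorem E0_inj {d : ℕ → Fin m} (hd : Admissible d) (hnp : ¬ EventuallyPeriodic d)
    {X : Set ℕ} {a b : ℕ} (h : E0 d X a = E0 d X b) : a = b := by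
  apply fol_set_eq hd hnp
  ext u
  simp only [Set.mem_setOf_eq]
  have h1 : (([], u) ∈ E0 d X a) ↔ (([], u) ∈ E0 d X b) := by rw [h]
  simpa [E0] using h1

theorem ext_eq_of_inv {d : ℕ → Fin m} (hd : Admissible d) {w v : List (Fin m)} {n : ℕ}
    (hw : w ∈ Lang d) (hwn : w.length = n) (hv : v ∈ Lang d) (hvn : v.length = n)
    (hT : Tset d w = Tset d v) (hk : classIndex d n w = classIndex d n v)
    (hM : ∀ t, 1 ≤ t → (IsAt d t w ↔ IsAt d t v)) : Ext d w = Ext d v := by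
  ext p
  show p.1 ++ w ++ p.2 ∈ Lang d ↔ p.1 ++ v ++ p.2 ∈ Lang d
  rw [ext_mem hd hw hwn, ext_mem hd hv hvn, hk]
  refine and_congr_right fun hu => and_congr_right fun _ => forall_congr' fun j =>
    imp_congr_right fun hj => or_congr_right (and_congr_right fun _ => ?_)
  have ht1 : 1 ≤ p.1.length - j := by omega
  have hstrict : StrictAt d (p.1.length - j) w ↔ StrictAt d (p.1.length - j) v := by
    rw [strictAt_iff, strictAt_iff, ← mem_Tset, ← mem_Tset, hT, hM _ ht1]
  rw [hstrict, hM _ ht1]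

theorem ext_ne {d : ℕ → Fin m} (hd : Admissible d) (hnp : ¬ EventuallyPeriodic d)
    {w v : List (Fin m)} {n t : ℕ}
    (hw : w ∈ Lang d) (hwn : w.length = n) (hv : v ∈ Lang d) (hvn : v.length = n)
    (ht : 1 ≤ t) (hIw : IsAt d t w)
    (hMv : ∀ t', 1 ≤ t' → ¬ IsAt d t' v)
    (hT : Tset d w = Tset d v) (hk : classIndex d n w = classIndex d n v) :
    Ext d w ≠ Ext d v := by
  set k := classIndex d n w with hkdef
  have hkn : k ≤ n := classIndex_le d n w
  have hsuf1 : prefixWord d k <:+ w := classIndex_suffix d n w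
  have hsuf2 : w <:+ prefixWord d (t + n) := by
    refine ⟨prefixWord d t, ?_⟩
    refine list_eq_of_e
      (by rw [List.length_append, prefixWord_length, prefixWord_length, hwn]) (fun i => ?_)
    rw [e_append, prefixWord_length]
    by_cases hi : i < t
    · rw [if_pos hi, e_prefixWord, e_prefixWord, if_pos hi, if_pos (by omega)]
    · rw [if_neg hi]
      by_cases hi2 : i < t + n
      · rw [hIw (i - t) (by rw [hwn]; omega), e_prefixWord, if_pos hi2]
        congr 1; omega
      · rw [e_ge (by rw [hwn]; omega), e_prefixWord, if_neg (by omega)]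
  have hsuf3 : prefixWord d k <:+ prefixWord d (t + n) := hsuf1.trans hsuf2
  have hle : SeqLe (Dd d (t + n)) (Dd d k) :=
    suffix_shift' hd hsuf3 (List.suffix_refl _) (by omega)
  have hstrict : toLex (Dd d (t + n)) < toLex (Dd d k) :=
    lt_of_le_of_ne (seqLe_iff.1 hle)
      (fun hc => shifts_ne hnp (show t + n ≠ k from by omega) (congrArg ofLex hc))
  obtain ⟨u0, hu1, hu2, hu3⟩ := seg_sep hd hstrict
  intro hEq
  have htv : t ∈ Tset d v := hT ▸ (isAt_seqle hIw)
  have hmemv : (prefixWord d t, u0) ∈ Ext d v := by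
    show prefixWord d t ++ v ++ u0 ∈ Lang d
    rw [ext_mem hd hv hvn]
    refine ⟨hu1, by rw [← hk]; exact hu2, ?_⟩
    rw [prefixWord_length]
    intro j hj
    rcases pred_test_mpr hd (tset_closed hd v) htv j hj with hS | ⟨hIs, hmem⟩
    · exact Or.inl hS
    · refine Or.inr ⟨hIs, Or.inl ?_⟩
      rw [strictAt_iff]
      exact ⟨hmem, hMv _ (by omega)⟩
  rw [← hEq] at hmemv
  have h5 : prefixWord d t ++ w ++ u0 ∈ Lang d := hmemv
  rw [ext_mem hd hw hwn] at h5
  obtain ⟨_, _, hcondw⟩ := h5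
  have h0 := hcondw 0 (by rw [prefixWord_length]; omega)
  rw [List.drop_zero, prefixWord_length, Nat.sub_zero] at h0
  rcases h0 with hS | ⟨_, hC⟩
  · obtain ⟨i, hi, _, hlt⟩ := hS
    rw [prefixWord_length] at hi
    rw [e_prefixWord, if_pos hi, show 0 + i = i from by omega] at hlt
    exact lt_irrefl _ hlt
  · rcases hC with hS2 | ⟨_, hle2⟩
    · exact strictAt_not_isAt hS2 hIw
    · exact hu3 hle2

/-! ### subwords of `d` -/

theorem occurs_d_iff {d : ℕ → Fin m} {w : List (Fin m)} :
    Occurs w d ↔ ∃ t, IsAt d t w := by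
  rw [occurs_iff]
  exact Iff.rfl

theorem lang_of_isAt {d : ℕ → Fin m} (hd : Admissible d) {t : ℕ} {w : List (Fin m)}
    (h : IsAt d t w) : w ∈ Lang d := by
  rw [eq_seg_of_isAt h]
  exact seg_mem_lang hd t w.length

theorem subword_unique {d : ℕ → Fin m} (hd : Admissible d) {x x' : List (Fin m)} {n : ℕ}
    (hx : x.length = n) (hx' : x'.length = n)
    (hox : Occurs x d) (hox' : Occurs x' d)
    (hT : Tset d x = Tset d x') : x = x' := by
  obtain ⟨t, ht⟩ := occurs_d_iff.1 hox
  obtain ⟨t', ht'⟩ := occurs_d_iff.1 hox'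
  have hseg : x = seg d t n := by rw [eq_seg_of_isAt ht, hx]
  have hseg' : x' = seg d t' n := by rw [eq_seg_of_isAt ht', hx']
  have h1 : SeqLe (e x') (e x) := by
    have htx' : t ∈ Tset d x' := hT ▸ (isAt_seqle ht)
    have h2 := (tset_iff_seg hd hx').1 htx'
    rwa [← hseg] at h2
  have h2 : SeqLe (e x) (e x') := by
    have htx : t' ∈ Tset d x := hT.symm ▸ (isAt_seqle ht')
    have h3 := (tset_iff_seg hd hx).1 htx
    rwa [← hseg'] at h3
  exact list_eq_of_e (by rw [hx, hx']) (congrFun (seqle_antisymm h2 h1))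

theorem exists_subword_T {d : ℕ → Fin m} (hd : Admissible d) {v : List (Fin m)} {n : ℕ}
    (hv : v ∈ Lang d) (hvn : v.length = n) :
    ∃ x : List (Fin m), x.length = n ∧ Occurs x d ∧ Tset d x = Tset d v := by
  classical
  set S : Set (List (Fin m)) := {x | (x.length = n ∧ Occurs x d) ∧ SeqLe (e v) (e x)} with hS
  have hfin : S.Finite := (List.finite_length_eq (Fin m) n).subset (fun x hx => hx.1.1)
  have hne : S.Nonempty := by
    refine ⟨seg d 0 n, ⟨⟨seg_length d 0 n, occurs_d_iff.2 ⟨0, isAt_seg d 0 n⟩⟩, ?_⟩⟩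
    have h1 := (lang_iff' hd).1 hv 0
    rw [List.drop_zero] at h1
    have h0 : SeqLe (e v) (Dd d 0) := by rwa [Dd_zero]
    exact (tset_iff_seg hd hvn).1 h0
  obtain ⟨x0, hx0S, hmin⟩ := Set.exists_min_image S (fun x => toLex (e x)) hfin hne
  refine ⟨x0, hx0S.1.1, hx0S.1.2, ?_⟩
  ext t
  simp only [mem_Tset]
  constructor
  · intro h
    exact seqle_trans hx0S.2 h
  · intro h
    have hseg : seg d t n ∈ S := ⟨⟨seg_length d t n, occurs_d_iff.2 ⟨t, isAt_seg d t n⟩⟩,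
      (tset_iff_seg hd hvn).1 h⟩
    have hminle := hmin _ hseg
    exact (tset_iff_seg hd hx0S.1.1).2 (seqLe_iff.2 hminle)

/-! ### per-fiber count -/

theorem fiber_card {d : ℕ → Fin m} (hd : Admissible d) (hnp : ¬ EventuallyPeriodic d)
    {n : ℕ} {x : List (Fin m)} (hxln : x.length = n) (hox : Occurs x d) :
    (Ext d '' {v | (v ∈ Lang d ∧ v.length = n) ∧ Tset d v = Tset d x}).ncard =
      1 + Set.ncard {k : ℕ | k ≤ n ∧ ∃ v ∈ Lang d, v.length = n ∧
          classIndex d n v = k ∧ v ≠ x ∧ Pred d v = Pred d x} := by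
  classical
  set fib : Set (List (Fin m)) :=
    {v | (v ∈ Lang d ∧ v.length = n) ∧ Tset d v = Tset d x} with hfib
  have hxLang : x ∈ Lang d := lang_of_isAt hd (occurs_d_iff.1 hox).choose_spec
  have hfibx : x ∈ fib := ⟨⟨hxLang, hxln⟩, rfl⟩
  have hfibfin : fib.Finite :=
    (List.finite_length_eq (Fin m) n).subset (fun v hv => hv.1.2)
  have hvfibM : ∀ v, v ∈ fib → v ≠ x → ∀ t, 1 ≤ t → ¬ IsAt d t v := by
    intro v hv hne t ht hIs
    exact hne (subword_unique hd hv.1.2 hxln (occurs_d_iff.2 ⟨t, hIs⟩) hox hv.2)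
  have himg : Ext d '' fib = insert (Ext d x) (Ext d '' (fib \ {x})) := by
    conv_lhs => rw [show fib = insert x (fib \ {x}) from by
      rw [Set.insert_diff_singleton, Set.insert_eq_self.2 hfibx]]
    rw [Set.image_insert_eq]
  set K : Set ℕ := {k | ∃ v, v ∈ fib ∧ v ≠ x ∧ classIndex d n v = k} with hK
  have hE0img : Ext d '' (fib \ {x}) = (fun k => E0 d (Tset d x) k) '' K := by
    ext S
    constructor
    · rintro ⟨v, ⟨hvfib, hvne⟩, rfl⟩
      have hvne' : v ≠ x := by simpa using hvne
      refine ⟨classIndex d n v, ⟨v, hvfib, hvne', rfl⟩, ?_⟩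
      show E0 d (Tset d x) (classIndex d n v) = Ext d v
      rw [← hvfib.2]
      exact (ext_eq_E0 hd hvfib.1.1 hvfib.1.2 (hvfibM v hvfib hvne')).symm
    · rintro ⟨k, ⟨v, hvfib, hvne, rfl⟩, rfl⟩
      refine ⟨v, ⟨hvfib, by simpa using hvne⟩, ?_⟩
      show Ext d v = E0 d (Tset d x) (classIndex d n v)
      rw [ext_eq_E0 hd hvfib.1.1 hvfib.1.2 (hvfibM v hvfib hvne), hvfib.2]
  have hinj : Set.InjOn (fun k => E0 d (Tset d x) k) K :=
    fun a _ b _ h => E0_inj hd hnp h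
  have hKeq : K = {k : ℕ | k ≤ n ∧ ∃ v ∈ Lang d, v.length = n ∧
      classIndex d n v = k ∧ v ≠ x ∧ Pred d v = Pred d x} := by
    ext k
    constructor
    · rintro ⟨v, hvfib, hvne, rfl⟩
      exact ⟨classIndex_le d n v, v, hvfib.1.1, hvfib.1.2, rfl, hvne,
        (pred_eq_iff hd hvfib.1.1 hvfib.1.2 hxLang hxln).2 hvfib.2⟩
    · rintro ⟨hkn, v, hvl, hvln, rfl, hvne, hPred⟩
      exact ⟨v, ⟨⟨hvl, hvln⟩, (pred_eq_iff hd hvl hvln hxLang hxln).1 hPred⟩, hvne, rfl⟩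
  have hnotmem : Ext d x ∉ Ext d '' (fib \ {x}) := by
    rintro ⟨v, ⟨hvfib, hvne⟩, hEq⟩
    have hvne' : v ≠ x := by simpa using hvne
    have hvLang := hvfib.1.1
    have hvln := hvfib.1.2
    by_cases hMx : ∃ t, 1 ≤ t ∧ IsAt d t x
    · obtain ⟨t, ht, hIt⟩ := hMx
      have hclvx : classIndex d n v = classIndex d n x :=
        cl_eq_of_ext hd hnp hvLang hvln hxLang hxln hEq
      exact ext_ne hd hnp hxLang hxln hvLang hvln ht hIt
        (hvfibM v hvfib hvne') hvfib.2.symm hclvx.symm hEq.symm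
    · push_neg at hMx
      obtain ⟨t0, ht0⟩ := occurs_d_iff.1 hox
      have ht00 : t0 = 0 := by
        by_contra hc
        exact hMx t0 (by omega) ht0
      have hIs0 : IsAt d 0 x := by rwa [ht00] at ht0
      have hxpre : x = prefixWord d n := by
        rw [prefixWord_eq_seg]
        rw [eq_seg_of_isAt hIs0, hxln]
      have hclx : classIndex d n x = n := by
        refine le_antisymm (classIndex_le d n x) (le_classIndex (le_refl n) ?_)
        rw [← hxpre]
      have hclv : classIndex d n v = n := by
        rw [cl_eq_of_ext hd hnp hvLang hvln hxLang hxln hEq, hclx]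
      have hsuf : prefixWord d n <:+ v := by
        have h0 := classIndex_suffix d n v
        rwa [hclv] at h0
      refine hvne' ?_
      rw [hxpre]
      exact (hsuf.eq_of_length (by rw [prefixWord_length, hvln])).symm
  rw [himg, Set.ncard_insert_of_notMem hnotmem ((hfibfin.diff (t := {x})).image _),
    hE0img, Set.ncard_image_of_injOn hinj, hKeq]
  omega

/-! ### the main count -/

theorem main {d : ℕ → Fin m} (hd : Admissible d) (hnp : ¬ EventuallyPeriodic d)
    {n : ℕ} (hn : 1 ≤ n) :
    ExtCount d n = Complexity d n +
      ∑ᶠ w ∈ {w : List (Fin m) | w.length = n ∧ Occurs w d},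
        Set.ncard {k : ℕ | k ≤ n ∧ ∃ v ∈ Lang d, v.length = n ∧
          classIndex d n v = k ∧ v ≠ w ∧ Pred d v = Pred d w} := by
  classical
  set Subs : Set (List (Fin m)) := {w : List (Fin m) | w.length = n ∧ Occurs w d} with hSubs
  set Ln : Set (List (Fin m)) := {w | w ∈ Lang d ∧ w.length = n} with hLnd
  set fib : List (Fin m) → Set (List (Fin m)) :=
    fun x => {v | (v ∈ Lang d ∧ v.length = n) ∧ Tset d v = Tset d x} with hfibd
  have hfinlen := List.finite_length_eq (Fin m) n
  have hLnfin : Ln.Finite := hfinlen.subset (fun w hw => hw.2)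
  have hSubsfin : Subs.Finite := hfinlen.subset (fun w hw => hw.1)
  have hfibfin : ∀ x, (Ext d '' fib x).Finite := fun x =>
    (hfinlen.subset (fun v hv => hv.1.2)).image _
  have hExtSet : {S | ∃ w ∈ Lang d, w.length = n ∧ S = Ext d w} = Ext d '' Ln := by
    ext S
    constructor
    · rintro ⟨w, hw, hl, rfl⟩
      exact ⟨w, ⟨hw, hl⟩, rfl⟩
    · rintro ⟨w, ⟨hw, hl⟩, rfl⟩
      exact ⟨w, hw, hl, rfl⟩
  have hcover : Ext d '' Ln = ⋃ x ∈ Subs, Ext d '' fib x := by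
    ext S
    constructor
    · rintro ⟨v, hv, rfl⟩
      obtain ⟨x, hxln, hox, hT⟩ := exists_subword_T hd hv.1 hv.2
      exact Set.mem_biUnion (show x ∈ Subs from ⟨hxln, hox⟩)
        ⟨v, ⟨⟨hv.1, hv.2⟩, hT.symm⟩, rfl⟩
    · intro hS
      simp only [Set.mem_iUnion] at hS
      obtain ⟨x, hx, v, hvfib, rfl⟩ := hS
      exact ⟨v, ⟨hvfib.1.1, hvfib.1.2⟩, rfl⟩
  have hdisj : ∀ a ∈ hSubsfin.toFinset, ∀ b ∈ hSubsfin.toFinset, a ≠ b →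
      Disjoint ((hfibfin a).toFinset) ((hfibfin b).toFinset) := by
    intro a ha b hb hab
    rw [Finset.disjoint_left]
    intro S hSa hSb
    rw [Set.Finite.mem_toFinset] at hSa hSb
    obtain ⟨v, hvfib, rfl⟩ := hSa
    obtain ⟨v', hvfib', hEq⟩ := hSb
    rw [Set.Finite.mem_toFinset] at ha hb
    apply hab
    refine subword_unique hd ha.1 hb.1 ha.2 hb.2 ?_
    have hTvv : Tset d v' = Tset d v :=
      T_eq_of_ext hd hvfib'.1.1 hvfib'.1.2 hvfib.1.1 hvfib.1.2 hEq
    rw [← hvfib.2, ← hvfib'.2, hTvv]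
  have hcard : (Ext d '' Ln).ncard = ∑ x ∈ hSubsfin.toFinset, (Ext d '' fib x).ncard := by
    have hcoe : Ext d '' Ln = ↑(hSubsfin.toFinset.biUnion fun x => (hfibfin x).toFinset) := by
      rw [Finset.coe_biUnion, hcover]
      simp only [Set.Finite.coe_toFinset]
    rw [hcoe, Set.ncard_coe_finset, Finset.card_biUnion hdisj]
    exact Finset.sum_congr rfl fun x _ => (Set.ncard_eq_toFinset_card _ (hfibfin x)).symm
  have hfibcard : ∀ x ∈ hSubsfin.toFinset, (Ext d '' fib x).ncard =
      1 + Set.ncard {k : ℕ | k ≤ n ∧ ∃ v ∈ Lang d, v.length = n ∧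
        classIndex d n v = k ∧ v ≠ x ∧ Pred d v = Pred d x} := by
    intro x hx
    rw [Set.Finite.mem_toFinset] at hx
    exact fiber_card hd hnp hx.1 hx.2
  have hEC : ExtCount d n = (Ext d '' Ln).ncard := congrArg Set.ncard hExtSet
  have hC : Complexity d n = Subs.ncard := rfl
  have hfs := finsum_mem_coe_finset
    (fun w => Set.ncard {k : ℕ | k ≤ n ∧ ∃ v ∈ Lang d, v.length = n ∧
      classIndex d n v = k ∧ v ≠ w ∧ Pred d v = Pred d w}) hSubsfin.toFinset
  rw [Set.Finite.coe_toFinset] at hfs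
  rw [hEC, hcard, hC, hfs, Set.ncard_eq_toFinset_card Subs hSubsfin]
  rw [Finset.sum_congr rfl hfibcard, Finset.sum_add_distrib, Finset.sum_const,
    smul_eq_mul, mul_one]

end BS16

/-- exact formula for `|E(n)|` for non-sofic β-shifts:
`|E(n)| = Φ_n(d) + ∑_w η(w)`, summing over all words `w` of length `n` occurring
in `d`, where `η(w)` counts the classes `S_k` (`0 ≤ k ≤ n`, `k` the largest `t ≤ n`
with `(d)_t` a suffix) containing some `v ≠ w` with `P(v) = P(w)`. -/
theorem stmt16 (m : ℕ) (hm : 1 ≤ m) (d : ℕ → Fin m) (hd : Admissible d)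
    (hnp : ¬ EventuallyPeriodic d) (n : ℕ) (hn : 1 ≤ n) :
    ExtCount d n = Complexity d n +
      ∑ᶠ w ∈ {w : List (Fin m) | w.length = n ∧ Occurs w d},
        Set.ncard {k : ℕ | k ≤ n ∧ ∃ v ∈ Lang d, v.length = n ∧
          classIndex d n v = k ∧ v ≠ w ∧ Pred d v = Pred d w} := by
  haveI : NeZero m := ⟨by omega⟩
  exact BS16.main hd hnp hn
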